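/- For any m ≤ n, ℚ_{m+1}(L₀,...,L_{m-1}, ℚ_n(L₀,...,L_{n-1})) is order isomorphic to ℚ_n(L₀,...,L_{n-1}): shuffling the first m of the L_i together with the full shuffle ℚ_n(L₀,...,L_{n-1}) as an extra argument recovers the original shuffle. -/

import Mathlib

set_option linter.unusedSectionVars false
set_option maxHeartbeats 1000000

/-- `Q` together with the colouring `c : Q → Fin n` is a copy of the `n`-coloured
rationals `ℚ_n`: a countable nonempty dense linear order without endpoints in which
each of the `n` colours occurs interdensely. -/
def IsQn (n : ℕ) (Q : Type*) [LinearOrder Q] (c : Q → Fin n) : Prop :=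
  Countable Q ∧ Nonempty Q ∧ DenselyOrdered Q ∧ NoMinOrder Q ∧ NoMaxOrder Q ∧
    ∀ x y : Q, x < y → ∀ i : Fin n, ∃ z : Q, x < z ∧ z < y ∧ c z = i

noncomputable section ShuffleAux


/-- cast an order iso along an equality of indices -/
def OIcast {ι : Type*} (L : ι → Type*) [∀ i, LinearOrder (L i)] {i j : ι} (h : i = j) :
    L i ≃o L j := by subst h; exact OrderIso.refl _

@[simp] lemma OIcast_rfl {ι : Type*} (L : ι → Type*) [∀ i, LinearOrder (L i)] {i : ι}
    (a : L i) : OIcast L (rfl : i = i) a = a := rfl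

/-- congruence for lexicographic sigma orders -/
def sigmaLexCongr {ι ι' : Type*} [LinearOrder ι] [LinearOrder ι']
    {F : ι → Type*} {G : ι' → Type*} [∀ i, LinearOrder (F i)] [∀ i', LinearOrder (G i')]
    (e : ι ≃o ι') (g : ∀ i, F i ≃o G (e i)) : (Σₗ i, F i) ≃o (Σₗ i', G i') := by
  refine StrictMono.orderIsoOfSurjective
    (fun p => toLex ⟨e (ofLex p).1, g _ (ofLex p).2⟩) ?_ ?_
  · rintro ⟨i, x⟩ ⟨j, y⟩ h
    rcases Sigma.Lex.lt_def.1 h with h1 | ⟨h1, h2⟩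
    · exact Sigma.Lex.lt_def.2 (Or.inl (e.strictMono h1))
    · dsimp only at h1; subst h1
      exact Sigma.Lex.lt_def.2 (Or.inr ⟨rfl, (g i).strictMono h2⟩)
  · rintro ⟨j, y⟩
    obtain ⟨i, rfl⟩ := e.surjective j
    exact ⟨toLex ⟨i, (g i).symm y⟩, by simp; exact congrArg (fun z => toLex (⟨e i, z⟩ : Σ j, G j)) ((g i).apply_symm_apply y)⟩

/-- associativity of lexicographic sigma -/
def sigmaLexAssoc {ι : Type*} [LinearOrder ι] (F : ι → Type*) [∀ i, LinearOrder (F i)]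
    (G : ∀ i, F i → Type*) [∀ i x, LinearOrder (G i x)] :
    (Σₗ i, Σₗ x : F i, G i x) ≃o (Σₗ p : (Σₗ i, F i), G p.1 p.2) := by
  refine StrictMono.orderIsoOfSurjective
    (fun p => toLex ⟨toLex ⟨(ofLex p).1, (ofLex (ofLex p).2).1⟩, (ofLex (ofLex p).2).2⟩) ?_ ?_
  · rintro ⟨i, x, a⟩ ⟨j, y, b⟩ h
    rcases Sigma.Lex.lt_def.1 h with h1 | ⟨h1, h2⟩
    · exact Sigma.Lex.lt_def.2 (Or.inl (Sigma.Lex.lt_def.2 (Or.inl h1)))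
    · dsimp only at h1; subst h1
      rcases Sigma.Lex.lt_def.1 h2 with h3 | ⟨h3, h4⟩
      · exact Sigma.Lex.lt_def.2 (Or.inl (Sigma.Lex.lt_def.2 (Or.inr ⟨rfl, h3⟩)))
      · dsimp only at h3; subst h3
        exact Sigma.Lex.lt_def.2 (Or.inr ⟨rfl, h4⟩)
  · rintro ⟨⟨i, x⟩, a⟩
    exact ⟨toLex ⟨i, toLex ⟨x, a⟩⟩, rfl⟩

/-- lexicographic sigma over a unique index -/
def sigmaLexUnique {ι : Type*} [LinearOrder ι] [Unique ι] (F : ι → Type*)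
    [∀ i, LinearOrder (F i)] : (Σₗ i, F i) ≃o F default := by
  refine StrictMono.orderIsoOfSurjective
    (fun p => OIcast F (Unique.eq_default (ofLex p).1) (ofLex p).2) ?_ ?_
  · rintro ⟨i, x⟩ ⟨j, y⟩ h
    obtain rfl : i = default := Unique.eq_default i
    obtain rfl : j = default := Unique.eq_default j
    rcases Sigma.Lex.lt_def.1 h with h1 | ⟨h1, h2⟩
    · exact absurd h1 (lt_irrefl _)
    · exact h2
  · intro y
    exact ⟨toLex ⟨default, y⟩, by simp; rfl⟩


namespace ColBF


variable {n : ℕ} {α β : Type*} [LinearOrder α] [LinearOrder β]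

/-- between any finsets lo < hi there is a point of any colour -/
theorem exists_between_finsets_col {c : α → Fin n} (h : IsQn n α c)
    (lo hi : Finset α) (lo_lt_hi : ∀ x ∈ lo, ∀ y ∈ hi, x < y) (i : Fin n) :
    ∃ m : α, c m = i ∧ (∀ x ∈ lo, x < m) ∧ ∀ y ∈ hi, m < y := by
  obtain ⟨_, hne, hd, hmin, hmax, hint⟩ := h
  obtain ⟨x0⟩ := hne
  have key : ∀ a b : α, a < b → ∃ m, c m = i ∧ a < m ∧ m < b := by
    intro a b hab
    obtain ⟨z, h1, h2, h3⟩ := hint a b hab i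
    exact ⟨z, h3, h1, h2⟩
  by_cases nlo : lo.Nonempty
  · by_cases nhi : hi.Nonempty
    · obtain ⟨z, hz, h1, h2⟩ :=
        key _ _ (lo_lt_hi _ (Finset.max'_mem _ nlo) _ (Finset.min'_mem _ nhi))
      exact ⟨z, hz, fun x hx => lt_of_le_of_lt (Finset.le_max' lo x hx) h1,
        fun y hy => lt_of_lt_of_le h2 (Finset.min'_le hi y hy)⟩
    · obtain ⟨b, hb⟩ := hmax.exists_gt (Finset.max' lo nlo)
      obtain ⟨z, hz, h1, h2⟩ := key _ _ hb
      exact ⟨z, hz, fun x hx => lt_of_le_of_lt (Finset.le_max' lo x hx) h1,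
        fun y hy => (nhi ⟨y, hy⟩).elim⟩
  · by_cases nhi : hi.Nonempty
    · obtain ⟨a, ha⟩ := hmin.exists_lt (Finset.min' hi nhi)
      obtain ⟨z, hz, h1, h2⟩ := key _ _ ha
      exact ⟨z, hz, fun x hx => (nlo ⟨x, hx⟩).elim,
        fun y hy => lt_of_lt_of_le h2 (Finset.min'_le hi y hy)⟩
    · obtain ⟨b, hb⟩ := hmax.exists_gt x0
      obtain ⟨z, hz, h1, h2⟩ := key _ _ hb
      exact ⟨z, hz, fun x hx => (nlo ⟨x, hx⟩).elim, fun y hy => (nhi ⟨y, hy⟩).elim⟩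

variable (cα : α → Fin n) (cβ : β → Fin n)

/-- coloured partial isomorphisms -/
def PIso : Type _ :=
  { f : Finset (α × β) //
    (∀ p ∈ f, ∀ q ∈ f, cmp (Prod.fst p) (Prod.fst q) = cmp (Prod.snd p) (Prod.snd q)) ∧
      ∀ p ∈ f, cβ (Prod.snd p) = cα (Prod.fst p) }

instance : Inhabited (PIso cα cβ) :=
  ⟨⟨∅, fun _p h => (Finset.notMem_empty _ h).elim, fun _p h => (Finset.notMem_empty _ h).elim⟩⟩

instance : Preorder (PIso cα cβ) := Subtype.preorder _

variable {cα cβ}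

theorem exists_across (hβ : IsQn n β cβ) (f : PIso cα cβ) (a : α) :
    ∃ b : β, cβ b = cα a ∧ ∀ p ∈ f.val, cmp (Prod.fst p) a = cmp (Prod.snd p) b := by
  by_cases h : ∃ b, (a, b) ∈ f.val
  · obtain ⟨b, hb⟩ := h
    exact ⟨b, f.prop.2 _ hb, fun p hp => f.prop.1 _ hp _ hb⟩
  have :
    ∀ x ∈ (f.val.filter fun p : α × β => p.fst < a).image Prod.snd,
      ∀ y ∈ (f.val.filter fun p : α × β => a < p.fst).image Prod.snd, x < y := by
    intro x hx y hy
    rw [Finset.mem_image] at hx hy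
    rcases hx with ⟨p, hp1, rfl⟩
    rcases hy with ⟨q, hq1, rfl⟩
    rw [Finset.mem_filter] at hp1 hq1
    rw [← lt_iff_lt_of_cmp_eq_cmp (f.prop.1 _ hp1.1 _ hq1.1)]
    exact lt_trans hp1.right hq1.right
  obtain ⟨b, hbc, hb1, hb2⟩ := exists_between_finsets_col hβ _ _ this (cα a)
  refine ⟨b, hbc, ?_⟩
  rintro ⟨p1, p2⟩ hp
  have hne : p1 ≠ a := fun he => h ⟨p2, he ▸ hp⟩
  rcases lt_or_gt_of_ne hne with hl | hr
  · have : p1 < a ∧ p2 < b :=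
      ⟨hl, hb1 _ (Finset.mem_image.mpr ⟨(p1, p2), Finset.mem_filter.mpr ⟨hp, hl⟩, rfl⟩)⟩
    rw [← cmp_eq_lt_iff, ← cmp_eq_lt_iff] at this
    exact this.1.trans this.2.symm
  · have : a < p1 ∧ b < p2 :=
      ⟨hr, hb2 _ (Finset.mem_image.mpr ⟨(p1, p2), Finset.mem_filter.mpr ⟨hp, hr⟩, rfl⟩)⟩
    rw [← cmp_eq_gt_iff, ← cmp_eq_gt_iff] at this
    exact this.1.trans this.2.symm

/-- swap a coloured partial isomorphism -/
protected def comm (f : PIso cα cβ) : PIso cβ cα :=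
  ⟨f.val.image (Equiv.prodComm _ _), by
    constructor
    · intro p hp q hq
      rw [Finset.mem_image] at hp hq
      obtain ⟨p', hp', rfl⟩ := hp
      obtain ⟨q', hq', rfl⟩ := hq
      exact (f.prop.1 p' hp' q' hq').symm
    · intro p hp
      rw [Finset.mem_image] at hp
      obtain ⟨p', hp', rfl⟩ := hp
      exact (f.prop.2 p' hp').symm⟩

theorem comm_mono {f g : PIso cα cβ} (h : f ≤ g) : ColBF.comm f ≤ ColBF.comm g :=
  Finset.image_subset_image h

/-- cofinal set of coloured partial isos defined at a given left point -/
def definedAtLeft (hβ : IsQn n β cβ) (a : α) : Order.Cofinal (PIso cα cβ) where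
  carrier := {f | ∃ b : β, (a, b) ∈ f.val}
  isCofinal f := by
    obtain ⟨b, hbc, a_b⟩ := exists_across hβ f a
    refine ⟨⟨insert (a, b) f.val, ?_, ?_⟩, ⟨b, Finset.mem_insert_self _ _⟩,
      Finset.subset_insert _ _⟩
    · intro p hp q hq
      rw [Finset.mem_insert] at hp hq
      rcases hp with (rfl | pf) <;> rcases hq with (rfl | qf)
      · simp only [cmp_self_eq_eq]
      · rw [cmp_eq_cmp_symm]; exact a_b _ qf
      · exact a_b _ pf
      · exact f.prop.1 _ pf _ qf
    · intro p hp
      rw [Finset.mem_insert] at hp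
      rcases hp with rfl | pf
      · exact hbc
      · exact f.prop.2 _ pf

/-- cofinal set of coloured partial isos defined at a given right point -/
def definedAtRight (hα : IsQn n α cα) (b : β) : Order.Cofinal (PIso cα cβ) where
  carrier := {f | ∃ a, (a, b) ∈ f.val}
  isCofinal f := by
    rcases (definedAtLeft hα b).isCofinal (ColBF.comm f) with ⟨f', ⟨a, ha⟩, hl⟩
    refine ⟨ColBF.comm f', ⟨a, ?_⟩, ?_⟩
    · change (a, b) ∈ f'.val.image _
      refine Finset.mem_image.2 ⟨(b, a), ha, rfl⟩
    · have := comm_mono hl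
      refine le_trans (le_of_eq (Subtype.ext ?_)) this
      show f.val = (ColBF.comm (ColBF.comm f)).val
      ext p
      simp only [ColBF.comm, Finset.mem_image]
      constructor
      · intro hp; exact ⟨(p.2, p.1), ⟨p, hp, rfl⟩, rfl⟩
      · rintro ⟨q, ⟨r, hr, rfl⟩, rfl⟩; simpa using hr

theorem exists_colored_iso {cα : α → Fin n} {cβ : β → Fin n}
    (hα : IsQn n α cα) (hβ : IsQn n β cβ) :
    ∃ e : α ≃o β, ∀ a, cβ (e a) = cα a := by
  obtain ⟨hcα, hneα, hdα, hminα, hmaxα, hintα⟩ := id hα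
  obtain ⟨hcβ, hneβ, hdβ, hminβ, hmaxβ, hintβ⟩ := id hβ
  cases nonempty_encodable α
  cases nonempty_encodable β
  let to_cofinal : α ⊕ β → Order.Cofinal (PIso cα cβ) := fun p =>
    Sum.recOn p (definedAtLeft hβ) (definedAtRight hα)
  let our_ideal : Order.Ideal (PIso cα cβ) := Order.idealOfCofinals default to_cofinal
  have hF : ∀ a : α, ∃ b : β, ∃ f ∈ our_ideal, (a, b) ∈ f.val := by
    intro a
    obtain ⟨f, hf1, hf2⟩ := Order.cofinal_meets_idealOfCofinals default to_cofinal (Sum.inl a)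
    obtain ⟨b, hb⟩ := hf1
    exact ⟨b, f, hf2, hb⟩
  have hG : ∀ b : β, ∃ a : α, ∃ f ∈ our_ideal, (a, b) ∈ f.val := by
    intro b
    obtain ⟨f, hf1, hf2⟩ := Order.cofinal_meets_idealOfCofinals default to_cofinal (Sum.inr b)
    obtain ⟨a, ha⟩ := hf1
    exact ⟨a, f, hf2, ha⟩
  have key : ∀ (a : α) (b : β), cmp a ((hG b).choose) = cmp ((hF a).choose) b := by
    intro a b
    obtain ⟨f, hf, ha⟩ := (hF a).choose_spec
    obtain ⟨g, hg, hb⟩ := (hG b).choose_spec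
    rcases our_ideal.directed _ hf _ hg with ⟨m, _, fm, gm⟩
    exact m.prop.1 (a, _) (fm ha) (_, b) (gm hb)
  refine ⟨OrderIso.ofCmpEqCmp (fun a => (hF a).choose) (fun b => (hG b).choose) key, ?_⟩
  intro a
  obtain ⟨f, _, ha⟩ := (hF a).choose_spec
  exact f.prop.2 _ ha


end ColBF

section Main


variable {n m : ℕ} (hmn : m ≤ n) {Q Q' : Type*} [LinearOrder Q] [LinearOrder Q']
  (c : Q → Fin n) (c' : Q' → Fin (m + 1))

/-- fibre over `q'`: a copy of `Q` if `c' q'` is the top colour, a point otherwise -/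
abbrev Wfib (q' : Q') : Type _ := {w : WithBot Q // w = ⊥ ↔ c' q' ≠ Fin.last m}

open Classical in
/-- the colouring of the expanded order -/
def cd (p : Σₗ q' : Q', Wfib (Q := Q) c' q') : Fin n :=
  if h : p.2.val = ⊥ then
    ⟨(c' p.1 : ℕ), lt_of_lt_of_le (Fin.val_lt_last (p.2.prop.mp h)) hmn⟩
  else c (p.2.val.unbot h)

/-- the bottom point of a non-top fibre -/
def bpt (q' : Q') (h : c' q' ≠ Fin.last m) : Σₗ q' : Q', Wfib (Q := Q) c' q' :=
  toLex ⟨q', ⟨⊥, iff_of_true rfl h⟩⟩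

/-- the point of a top fibre corresponding to `q : Q` -/
def cpt (q' : Q') (h : c' q' = Fin.last m) (q : Q) : Σₗ q' : Q', Wfib (Q := Q) c' q' :=
  toLex ⟨q', ⟨(q : WithBot Q), iff_of_false WithBot.coe_ne_bot (not_not_intro h)⟩⟩

lemma cd_val_coe (q' : Q') (w : Wfib (Q := Q) c' q') (q : Q) (hw : w.val = ↑q) :
    cd hmn c c' (toLex ⟨q', w⟩) = c q := by
  have hb : (toLex (⟨q', w⟩ : Σ q'', Wfib (Q := Q) c' q'')).snd.val ≠ ⊥ := by
    show w.val ≠ ⊥; rw [hw]; exact WithBot.coe_ne_bot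
  unfold cd
  rw [dif_neg hb]
  congr 1
  apply WithBot.coe_injective
  rw [WithBot.coe_unbot]
  exact hw

lemma cd_cpt (q' : Q') (h : c' q' = Fin.last m) (q : Q) :
    cd hmn c c' (cpt c' q' h q) = c q :=
  cd_val_coe hmn c c' q' _ q rfl

lemma cd_bpt (q' : Q') (h : c' q' ≠ Fin.last m) :
    cd hmn c c' (bpt c' q' h) = Fin.castLE hmn ⟨(c' q' : ℕ), Fin.val_lt_last h⟩ := by
  have hb : (toLex (⟨q', ⟨⊥, iff_of_true rfl h⟩⟩ : Σ q'', Wfib (Q := Q) c' q'')).snd.val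
      = ⊥ := rfl
  unfold cd bpt
  rw [dif_pos hb]
  apply Fin.ext
  show (c' q' : ℕ) = _
  simp [Fin.castLE]


/-- every colour occurs in a copy of ℚ_n -/
lemma exists_color {c : Q → Fin n} (hQ : IsQn n Q c) (i : Fin n) : ∃ q : Q, c q = i := by
  obtain ⟨_, ⟨x0⟩, _, _, hmax, hint⟩ := hQ
  obtain ⟨y0, hy0⟩ := hmax.exists_gt x0
  obtain ⟨z, _, _, hz⟩ := hint x0 y0 hy0 i
  exact ⟨z, hz⟩

theorem isQn_Qd (hQ : IsQn n Q c) (hQ' : IsQn (m + 1) Q' c') :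
    IsQn n (Σₗ q' : Q', Wfib (Q := Q) c' q') (cd hmn c c') := by
  obtain ⟨hc, hne, hd, hmin, hmax, hint⟩ := id hQ
  obtain ⟨hc', hne', hd', hmin', hmax', hint'⟩ := id hQ'
  obtain ⟨q0⟩ := id hne
  have hpt : ∀ q' : Q', ∃ p : Σₗ q'' : Q', Wfib (Q := Q) c' q'', p.1 = q' := by
    intro q'
    by_cases h : c' q' = Fin.last m
    · exact ⟨cpt c' q' h q0, rfl⟩
    · exact ⟨bpt c' q' h, rfl⟩
  have hinterd : ∀ x y : Σₗ q' : Q', Wfib (Q := Q) c' q', x < y → ∀ i : Fin n,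
      ∃ z, x < z ∧ z < y ∧ cd hmn c c' z = i := by
    rintro ⟨q1, w1⟩ ⟨q2, w2⟩ hxy i
    rcases Sigma.Lex.lt_def.1 hxy with h | ⟨h, h2⟩
    · obtain ⟨q'', hq1, hq2, hcq⟩ := hint' q1 q2 h (Fin.last m)
      obtain ⟨z0, hz0⟩ := exists_color hQ i
      refine ⟨cpt c' q'' hcq z0, ?_, ?_, ?_⟩
      · exact Sigma.Lex.lt_def.2 (Or.inl hq1)
      · exact Sigma.Lex.lt_def.2 (Or.inl hq2)
      · exact (cd_cpt hmn c c' q'' hcq z0).trans hz0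
    · dsimp only at h
      subst h
      by_cases hl : c' q1 = Fin.last m
      · have hw1 : w1.val ≠ ⊥ := fun hb => (w1.prop.mp hb) hl
        have hw2 : w2.val ≠ ⊥ := fun hb => (w2.prop.mp hb) hl
        obtain ⟨a, ha⟩ := WithBot.ne_bot_iff_exists.1 hw1
        obtain ⟨b, hb⟩ := WithBot.ne_bot_iff_exists.1 hw2
        have hab : a < b := by
          rw [← WithBot.coe_lt_coe, ha, hb]
          exact h2
        obtain ⟨z0, hz1, hz2, hz3⟩ := hint a b hab i
        refine ⟨cpt c' q1 hl z0, ?_, ?_, ?_⟩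
        · refine Sigma.Lex.lt_def.2 (Or.inr ⟨rfl, ?_⟩)
          rw [← Subtype.coe_lt_coe]
          show w1.val < ((z0 : WithBot Q))
          rw [← ha]
          exact WithBot.coe_lt_coe.2 hz1
        · refine Sigma.Lex.lt_def.2 (Or.inr ⟨rfl, ?_⟩)
          rw [← Subtype.coe_lt_coe]
          show ((z0 : WithBot Q)) < w2.val
          rw [← hb]
          exact WithBot.coe_lt_coe.2 hz2
        · exact (cd_cpt hmn c c' q1 hl z0).trans hz3
      · exfalso
        have hw1 : w1.val = ⊥ := w1.prop.mpr hl
        have hw2 : w2.val = ⊥ := w2.prop.mpr hl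
        have : w1.val < w2.val := h2
        rw [hw1, hw2] at this
        exact lt_irrefl _ this
  refine ⟨?_, ?_, ?_, ?_, ?_, hinterd⟩
  · have : Countable (Σ q' : Q', Wfib (Q := Q) c' q') := inferInstance
    exact this
  · obtain ⟨q'0⟩ := hne'
    obtain ⟨p, _⟩ := hpt q'0
    exact ⟨p⟩
  · constructor
    intro x y hxy
    obtain ⟨z, hz1, hz2, _⟩ := hinterd x y hxy (c q0)
    exact ⟨z, hz1, hz2⟩
  · constructor
    rintro ⟨q1, w1⟩
    obtain ⟨q2, hq2⟩ := hmin'.exists_lt q1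
    obtain ⟨p, hp⟩ := hpt q2
    refine ⟨p, Sigma.Lex.lt_def.2 (Or.inl ?_)⟩
    rw [hp]
    exact hq2
  · constructor
    rintro ⟨q1, w1⟩
    obtain ⟨q2, hq2⟩ := hmax'.exists_gt q1
    obtain ⟨p, hp⟩ := hpt q2
    refine ⟨p, Sigma.Lex.lt_def.2 (Or.inl ?_)⟩
    rw [hp]
    exact hq2


def fiberIso (L : Fin n → Type*) [∀ i, LinearOrder (L i)]
    (M : Fin (m + 1) → Type*) [∀ j, LinearOrder (M j)]
    (eL : ∀ j : Fin (m + 1), ∀ h : (j : ℕ) < m, M j ≃o L (Fin.castLE hmn ⟨j, h⟩))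
    (eT : ∀ j : Fin (m + 1), (j : ℕ) = m → (M j ≃o (Σₗ q : Q, L (c q))))
    (q' : Q') :
    M (c' q') ≃o (Σₗ w : Wfib (Q := Q) c' q', L (cd hmn c c' (toLex ⟨q', w⟩))) := by
  by_cases h : c' q' = Fin.last m
  · refine (eT (c' q') ((congrArg Fin.val h).trans (Fin.val_last m))).trans ?_
    have hcoe : ∀ q : Q, ((q : WithBot Q) = ⊥ ↔ c' q' ≠ Fin.last m) := fun q =>
      iff_of_false WithBot.coe_ne_bot (not_not_intro h)
    let wIso : Q ≃o Wfib (Q := Q) c' q' := StrictMono.orderIsoOfSurjective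
      (fun q => ⟨(q : WithBot Q), hcoe q⟩)
      (fun a b hab => Subtype.mk_lt_mk.2 (WithBot.coe_lt_coe.2 hab))
      (fun w => by
        obtain ⟨a, ha⟩ := WithBot.ne_bot_iff_exists.1 (fun hb => (w.prop.mp hb) h)
        exact ⟨a, Subtype.ext ha⟩)
    exact sigmaLexCongr wIso (fun q => OIcast L (cd_val_coe hmn c c' q' (wIso q) q rfl).symm)
  · letI : Unique (Wfib (Q := Q) c' q') :=
      { default := ⟨⊥, iff_of_true rfl h⟩
        uniq := fun w => Subtype.ext (w.prop.mpr h) }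
    refine ((eL (c' q') (Fin.val_lt_last h)).trans
      (OIcast L (cd_bpt hmn c c' q' h).symm)).trans ?_
    exact (sigmaLexUnique (fun w : Wfib (Q := Q) c' q' =>
      L (cd hmn c c' (toLex ⟨q', w⟩)))).symm

end Main
end ShuffleAux

/-- ℚ_{m+1}(L₀,...,L_{m-1}, ℚ_n(L₀,...,L_{n-1})) ≅ ℚ_n(L₀,...,L_{n-1}): shuffling the
first m of the L_i together with the full shuffle as an extra argument recovers the
original shuffle.  Here M : Fin (m+1) → Type is the family of arguments of the outer
shuffle, specified up to order isomorphism. -/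
theorem shuffle_nested (n m : ℕ) (hmn : m ≤ n) (Q Q' : Type*) [LinearOrder Q]
    [LinearOrder Q'] (c : Q → Fin n) (c' : Q' → Fin (m + 1))
    (hQ : IsQn n Q c) (hQ' : IsQn (m + 1) Q' c')
    (L : Fin n → Type*) [∀ i, LinearOrder (L i)] [∀ i, Nonempty (L i)]
    (M : Fin (m + 1) → Type*) [∀ j, LinearOrder (M j)]
    (hMlow : ∀ j : Fin (m + 1), ∀ h : (j : ℕ) < m,
      Nonempty (M j ≃o L (Fin.castLE hmn ⟨j, h⟩)))
    (hMtop : ∀ j : Fin (m + 1), (j : ℕ) = m →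
      Nonempty (M j ≃o (Σₗ q : Q, L (c q)))) :
    Nonempty ((Σₗ q' : Q', M (c' q')) ≃o (Σₗ q : Q, L (c q))) := by
  classical
  let eL : ∀ j : Fin (m + 1), ∀ h : (j : ℕ) < m, M j ≃o L (Fin.castLE hmn ⟨j, h⟩) :=
    fun j h => (hMlow j h).some
  let eT : ∀ j : Fin (m + 1), (j : ℕ) = m → (M j ≃o (Σₗ q : Q, L (c q))) :=
    fun j h => (hMtop j h).some
  obtain ⟨e, he⟩ := ColBF.exists_colored_iso (isQn_Qd hmn c c' hQ hQ') hQ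
  refine ⟨?_⟩
  refine (sigmaLexCongr
    (G := fun q' : Q' => Σₗ w : Wfib (Q := Q) c' q', L (cd hmn c c' (toLex ⟨q', w⟩)))
    (OrderIso.refl Q') (fun q' => fiberIso hmn c c' L M eL eT q')).trans ?_
  refine (sigmaLexAssoc (Wfib (Q := Q) c')
    (fun q' w => L (cd hmn c c' (toLex ⟨q', w⟩)))).trans ?_
  exact sigmaLexCongr e (fun p => OIcast L (he p).symm)
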